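/- A paving k-matroid (V,H) is equatable if and only if it is exchangeable. -/

import Mathlib

open Finset

variable {V : Type*}

/-- A `k`-hypergraph `H` is separable if some vertex labeling `x : V → ℝ` has
`H` equal to the set of `k`-subsets with nonnegative label sum. -/
def SeparableHypergraph [Fintype V] [DecidableEq V] (k : ℕ) (H : Finset (Finset V)) : Prop :=
  ∃ x : V → ℝ, ∀ E : Finset V, E ∈ H ↔ E.card = k ∧ 0 ≤ ∑ v ∈ E, x v

/-- A `k`-hypergraph `H` is equatable if some nonzero nonnegative labeling `y` of the
`k`-subsets of `V` has, for every vertex `v`, the sum of labels of edges containing `v`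
equal to the sum of labels of non-edges containing `v`. -/
def EquatableHypergraph [Fintype V] [DecidableEq V] (k : ℕ) (H : Finset (Finset V)) : Prop :=
  ∃ y : Finset V → ℝ,
    (∀ G, 0 ≤ y G) ∧
    (∃ G ∈ (univ : Finset V).powersetCard k, y G ≠ 0) ∧
    ∀ v : V,
      ∑ E ∈ ((univ : Finset V).powersetCard k).filter (fun E => v ∈ E ∧ E ∈ H), y E =
      ∑ F ∈ ((univ : Finset V).powersetCard k).filter (fun F => v ∈ F ∧ F ∉ H), y F

/-- A hypergraph is exchangeable if there are edges `E₁, E₂` and `v₁ ∈ E₁ \ E₂`,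
`v₂ ∈ E₂ \ E₁` such that both sets obtained by exchanging `v₁` and `v₂` are non-edges. -/
def ExchangeableHypergraph [DecidableEq V] (H : Finset (Finset V)) : Prop :=
  ∃ E₁ ∈ H, ∃ E₂ ∈ H, ∃ v₁ ∈ E₁ \ E₂, ∃ v₂ ∈ E₂ \ E₁,
    insert v₂ (E₁.erase v₁) ∉ H ∧ insert v₁ (E₂.erase v₂) ∉ H


namespace PavingMatroidAux


variable [Fintype V] [DecidableEq V] {k : ℕ} {H : Finset (Finset V)}

lemma extend_basis (hk : 1 ≤ k) (hH : ∀ E ∈ H, E.card = k)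
    (hpaving : ∀ I : Finset V, I.card = k - 1 → ∃ E ∈ H, I ⊆ E)
    {I : Finset V} (hI : I.card = k - 1) :
    ∃ z, z ∉ I ∧ insert z I ∈ H := by
  obtain ⟨E, hE, hIE⟩ := hpaving I hI
  have hEk := hH E hE
  have hcard : (E \ I).card = 1 := by rw [card_sdiff_of_subset hIE, hEk, hI]; omega
  obtain ⟨z, hz⟩ := card_eq_one.mp hcard
  have hzI : z ∉ I := by
    have : z ∈ E \ I := hz ▸ mem_singleton_self z
    exact (mem_sdiff.mp this).2
  have hEeq : E = insert z I := by
    have h2 := union_sdiff_of_subset hIE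
    rw [hz] at h2
    rw [← h2, union_comm]; ext x; simp [or_comm]
  exact ⟨z, hzI, hEeq ▸ hE⟩

lemma swap_dep (hk : 1 ≤ k) (hH : ∀ E ∈ H, E.card = k)
    (hbex : ∀ E₁ ∈ H, ∀ E₂ ∈ H, ∀ v₁ ∈ E₁ \ E₂,
      ∃ v₂ ∈ E₂ \ E₁, insert v₂ (E₁.erase v₁) ∈ H)
    (hpaving : ∀ I : Finset V, I.card = k - 1 → ∃ E ∈ H, I ⊆ E)
    {I : Finset V} {u u' : V} (hI : I.card = k - 1) (hu : u ∉ I) (hu' : u' ∉ I)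
    (huu : u ≠ u') (h1 : insert u I ∉ H) (h2 : insert u' I ∉ H)
    {v : V} (_hv : v ∈ I) :
    insert u (insert u' (I.erase v)) ∉ H := by
  intro hJ
  obtain ⟨z, hzI, hzH⟩ := extend_basis hk hH hpaving hI
  have hzu : z ≠ u := by rintro rfl; exact h1 hzH
  have hzu' : z ≠ u' := by rintro rfl; exact h2 hzH
  have hzJ : z ∉ insert u (insert u' (I.erase v)) := by
    simp only [mem_insert, mem_erase]
    push_neg
    exact ⟨hzu, hzu', fun _ => hzI⟩
  obtain ⟨t, ht, htH⟩ := hbex _ hzH _ hJ z (mem_sdiff.mpr ⟨mem_insert_self _ _, hzJ⟩)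
  rw [erase_insert hzI] at htH
  have htI : t ∉ insert z I := (mem_sdiff.mp ht).2
  have : t = u ∨ t = u' := by
    have := (mem_sdiff.mp ht).1
    simp only [mem_insert, mem_erase] at this
    rcases this with h | h | ⟨_, h⟩
    · exact Or.inl h
    · exact Or.inr h
    · exact absurd (mem_insert_of_mem h) htI
  rcases this with rfl | rfl
  · exact h1 htH
  · exact h2 htH

lemma swap_dep_move (hk : 1 ≤ k) (hH : ∀ E ∈ H, E.card = k)
    (hbex : ∀ E₁ ∈ H, ∀ E₂ ∈ H, ∀ v₁ ∈ E₁ \ E₂,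
      ∃ v₂ ∈ E₂ \ E₁, insert v₂ (E₁.erase v₁) ∈ H)
    (hpaving : ∀ I : Finset V, I.card = k - 1 → ∃ E ∈ H, I ⊆ E)
    {C : Finset V} {u v v' : V} (hC : C ∉ H) (hCk : C.card = k)
    (hv : v ∈ C) (hv' : v' ∈ C) (hvv : v ≠ v') (hu : u ∉ C)
    (hdep : insert u (C.erase v) ∉ H) :
    insert u (C.erase v') ∉ H := by
  have hIcard : (C.erase v).card = k - 1 := by rw [card_erase_of_mem hv, hCk]
  have hvI : v ∉ C.erase v := notMem_erase _ _
  have huI : u ∉ C.erase v := fun h => hu (mem_of_mem_erase h)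
  have hvu : v ≠ u := fun h => hu (h ▸ hv)
  have h1 : insert v (C.erase v) ∉ H := by rw [insert_erase hv]; exact hC
  have hv'I : v' ∈ C.erase v := mem_erase.mpr ⟨fun h => hvv h.symm, hv'⟩
  have key := swap_dep hk hH hbex hpaving hIcard hvI huI hvu h1 hdep hv'I
  have heq : insert v (insert u ((C.erase v).erase v')) = insert u (C.erase v') := by
    rw [Finset.insert_comm]
    congr 1
    rw [erase_right_comm]
    exact insert_erase (mem_erase.mpr ⟨hvv, hv⟩)
  rwa [heq] at key

def pmCl (H : Finset (Finset V)) (C : Finset V) : Finset V :=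
  univ.filter (fun u => u ∈ C ∨ ∃ v ∈ C, insert u (C.erase v) ∉ H)

lemma mem_pmCl {C : Finset V} {u : V} :
    u ∈ pmCl H C ↔ u ∈ C ∨ ∃ v ∈ C, insert u (C.erase v) ∉ H := by
  simp [pmCl]

lemma subset_pmCl {C : Finset V} : C ⊆ pmCl H C :=
  fun _ hu => mem_pmCl.mpr (Or.inl hu)

lemma pmCl_strong (hk : 1 ≤ k) (hH : ∀ E ∈ H, E.card = k)
    (hbex : ∀ E₁ ∈ H, ∀ E₂ ∈ H, ∀ v₁ ∈ E₁ \ E₂,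
      ∃ v₂ ∈ E₂ \ E₁, insert v₂ (E₁.erase v₁) ∈ H)
    (hpaving : ∀ I : Finset V, I.card = k - 1 → ∃ E ∈ H, I ⊆ E)
    {C : Finset V} {u : V} (hC : C ∉ H) (hCk : C.card = k)
    (hu : u ∈ pmCl H C) (huC : u ∉ C) :
    ∀ v ∈ C, insert u (C.erase v) ∉ H := by
  obtain ⟨v₀, hv₀, h₀⟩ := (mem_pmCl.mp hu).resolve_left huC
  intro v hv
  by_cases hvv : v₀ = v
  · exact hvv ▸ h₀
  · exact swap_dep_move hk hH hbex hpaving hC hCk hv₀ hv hvv huC h₀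

section Steps

variable (hk : 1 ≤ k) (hH : ∀ E ∈ H, E.card = k)
    (hbex : ∀ E₁ ∈ H, ∀ E₂ ∈ H, ∀ v₁ ∈ E₁ \ E₂,
      ∃ v₂ ∈ E₂ \ E₁, insert v₂ (E₁.erase v₁) ∈ H)
    (hpaving : ∀ I : Finset V, I.card = k - 1 → ∃ E ∈ H, I ⊆ E)

include hk hH hbex hpaving

lemma step_facts {C : Finset V} {u v : V} (hC : C ∉ H) (hCk : C.card = k)
    (hv : v ∈ C) (hu : u ∈ pmCl H C) (huC : u ∉ C) :
    insert u (C.erase v) ∉ H ∧ (insert u (C.erase v)).card = k ∧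
      pmCl H C ⊆ pmCl H (insert u (C.erase v)) := by
  have huCv : u ∉ C.erase v := fun h => huC (mem_of_mem_erase h)
  have hC' : insert u (C.erase v) ∉ H :=
    pmCl_strong hk hH hbex hpaving hC hCk hu huC v hv
  have hcard : (insert u (C.erase v)).card = k := by
    rw [card_insert_of_notMem huCv, card_erase_of_mem hv, hCk]; omega
  refine ⟨hC', hcard, fun w hw => ?_⟩
  by_cases hwC' : w ∈ insert u (C.erase v)
  · exact subset_pmCl hwC'
  · refine mem_pmCl.mpr (Or.inr ⟨u, mem_insert_self _ _, ?_⟩)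
    rw [erase_insert huCv]
    by_cases hwv : w = v
    · subst hwv; rw [insert_erase hv]; exact hC
    · have hwC : w ∉ C := by
        intro h
        exact hwC' (mem_insert_of_mem (mem_erase.mpr ⟨hwv, h⟩))
      exact pmCl_strong hk hH hbex hpaving hC hCk hw hwC v hv

lemma step_cl_eq {C : Finset V} {u v : V} (hC : C ∉ H) (hCk : C.card = k)
    (hv : v ∈ C) (hu : u ∈ pmCl H C) (huC : u ∉ C) :
    pmCl H (insert u (C.erase v)) = pmCl H C := by
  obtain ⟨hC', hcard, hsub⟩ := step_facts hk hH hbex hpaving hC hCk hv hu huC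
  have huCv : u ∉ C.erase v := fun h => huC (mem_of_mem_erase h)
  have hback : insert v ((insert u (C.erase v)).erase u) = C := by
    rw [erase_insert huCv, insert_erase hv]
  have hvC' : v ∉ insert u (C.erase v) := by
    simp only [mem_insert, mem_erase]
    push_neg
    exact ⟨fun h => huC (h ▸ hv), fun h => absurd rfl h⟩
  have hvcl : v ∈ pmCl H (insert u (C.erase v)) :=
    mem_pmCl.mpr (Or.inr ⟨u, mem_insert_self _ _, by rw [hback]; exact hC⟩)
  have hsub2 := (step_facts hk hH hbex hpaving hC' hcard
    (mem_insert_self u _) hvcl hvC').2.2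
  rw [hback] at hsub2
  exact Subset.antisymm hsub2 hsub

lemma dep_of_subset_cl :
    ∀ n (C F : Finset V), C ∉ H → C.card = k → F.card = k → F ⊆ pmCl H C →
      (F \ C).card = n → F ∉ H ∧ pmCl H F = pmCl H C := by
  intro n
  induction n with
  | zero =>
    intro C F hC hCk hFk hsub hn
    have : F ⊆ C := by
      intro x hx
      by_contra hxC
      exact absurd (card_eq_zero.mp hn ▸ mem_sdiff.mpr ⟨hx, hxC⟩) (notMem_empty x)
    have hFC : F = C := eq_of_subset_of_card_le this (by omega)
    subst hFC; exact ⟨hC, rfl⟩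
  | succ n ih =>
    intro C F hC hCk hFk hsub hn
    have hne : (F \ C).Nonempty := by
      rw [← card_pos, hn]; omega
    obtain ⟨u, hu⟩ := hne
    have huF : u ∈ F := (mem_sdiff.mp hu).1
    have huC : u ∉ C := (mem_sdiff.mp hu).2
    have hCF : (C \ F).Nonempty := by
      rw [← card_pos]
      have h1 := card_sdiff_add_card_inter F C
      have h2 := card_sdiff_add_card_inter C F
      rw [inter_comm C F] at h2
      omega
    obtain ⟨v, hv⟩ := hCF
    have hvC : v ∈ C := (mem_sdiff.mp hv).1
    have hvF : v ∉ F := (mem_sdiff.mp hv).2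
    obtain ⟨hC', hcard, _⟩ :=
      step_facts hk hH hbex hpaving hC hCk hvC (hsub huF) huC
    have hcleq := step_cl_eq hk hH hbex hpaving hC hCk hvC (hsub huF) huC
    have hsub' : F ⊆ pmCl H (insert u (C.erase v)) := by rw [hcleq]; exact hsub
    have hdiff : F \ insert u (C.erase v) = (F \ C).erase u := by
      ext x
      simp only [mem_sdiff, mem_erase, mem_insert]
      constructor
      · rintro ⟨hxF, hx⟩
        push_neg at hx
        exact ⟨hx.1, hxF, hx.2 (fun h => hvF (h ▸ hxF))⟩
      · rintro ⟨hxu, hxF, hxC⟩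
        refine ⟨hxF, ?_⟩
        push_neg
        exact ⟨hxu, fun _ => hxC⟩
    have hdn : (F \ insert u (C.erase v)).card = n := by
      rw [hdiff, card_erase_of_mem hu, hn]
      omega
    obtain ⟨hFH, hclF⟩ := ih (insert u (C.erase v)) F hC' hcard hFk hsub' hdn
    exact ⟨hFH, hclF.trans hcleq⟩

lemma indep_insert {C I : Finset V} {x : V} (hC : C ∉ H) (hCk : C.card = k)
    (hI : I.card = k - 1) (hIcl : I ⊆ pmCl H C) (hx : x ∉ pmCl H C) :
    insert x I ∈ H := by
  have hclcard : k ≤ (pmCl H C).card := hCk ▸ card_le_card subset_pmCl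
  have : ∃ s ∈ pmCl H C, s ∉ I := by
    by_contra h
    push_neg at h
    have : (pmCl H C).card ≤ I.card := card_le_card h
    omega
  obtain ⟨s, hscl, hsI⟩ := this
  have hFk : (insert s I).card = k := by rw [card_insert_of_notMem hsI, hI]; omega
  have hFsub : insert s I ⊆ pmCl H C := insert_subset hscl hIcl
  obtain ⟨hFH, hclF⟩ := dep_of_subset_cl hk hH hbex hpaving
    ((insert s I \ C).card) C (insert s I) hC hCk hFk hFsub rfl
  have hxF : x ∉ pmCl H (insert s I) := by rw [hclF]; exact hx
  rw [mem_pmCl] at hxF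
  push_neg at hxF
  have := hxF.2 s (mem_insert_self s I)
  rwa [erase_insert hsI] at this

end Steps


variable {V : Type*} [Fintype V] [DecidableEq V]

/-- sum swap lemma -/
lemma sum_swap (x : V → ℝ) (y : Finset V → ℝ) (s : Finset (Finset V))
    (p : Finset V → Prop) [DecidablePred p] :
    ∑ v : V, x v * ∑ E ∈ s.filter (fun E => v ∈ E ∧ p E), y E
      = ∑ E ∈ s.filter p, (∑ v ∈ E, x v) * y E := by
  have h1 : ∀ v : V, s.filter (fun E => v ∈ E ∧ p E)
      = (s.filter p).filter (fun E => v ∈ E) := by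
    intro v
    rw [filter_filter]
    apply filter_congr
    intro E _
    simp [and_comm]
  calc ∑ v : V, x v * ∑ E ∈ s.filter (fun E => v ∈ E ∧ p E), y E
      = ∑ v : V, ∑ E ∈ s.filter p, if v ∈ E then x v * y E else 0 := by
        refine Finset.sum_congr rfl fun v _ => ?_
        rw [h1 v, Finset.mul_sum, Finset.sum_filter]
    _ = ∑ E ∈ s.filter p, ∑ v : V, if v ∈ E then x v * y E else 0 :=
        Finset.sum_comm
    _ = ∑ E ∈ s.filter p, (∑ v ∈ E, x v) * y E := by
        refine Finset.sum_congr rfl fun E _ => ?_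
        rw [Finset.sum_ite_mem, univ_inter, Finset.sum_mul]

lemma not_equatable_of_sep {k : ℕ} {H : Finset (Finset V)} (hk : 1 ≤ k)
    {P : Finset V} (hsep : ∀ F : Finset V, F.card = k → (F ∉ H ↔ F ⊆ P)) :
    ¬ EquatableHypergraph k H := by
  rintro ⟨y, hy0, ⟨G, hG, hGne⟩, heq⟩
  set x : V → ℝ := fun v => if v ∈ P then (-1 : ℝ) else (k : ℝ) with hx
  set A := ((univ : Finset V).powersetCard k) with hA
  have hmemA : ∀ F ∈ A, F.card = k := fun F hF => (mem_powersetCard_univ.mp hF)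
  have key : ∑ v : V, x v * ∑ E ∈ A.filter (fun E => v ∈ E ∧ E ∈ H), y E
      = ∑ v : V, x v * ∑ F ∈ A.filter (fun F => v ∈ F ∧ F ∉ H), y F :=
    Finset.sum_congr rfl fun v _ => by rw [heq v]
  rw [sum_swap, sum_swap] at key
  -- evaluate σ on non-edges
  have hneg : ∀ F ∈ A.filter (fun F => F ∉ H), (∑ v ∈ F, x v) = -(k : ℝ) := by
    intro F hF
    obtain ⟨hFA, hFH⟩ := mem_filter.mp hF
    have hFk := hmemA F hFA
    have hFP : F ⊆ P := (hsep F hFk).mp hFH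
    have : ∀ v ∈ F, x v = -1 := fun v hv => by simp [hx, hFP hv]
    rw [Finset.sum_congr rfl this, Finset.sum_const, hFk]
    simp
  have hpos : ∀ E ∈ A.filter (fun E => E ∈ H), (1 : ℝ) ≤ ∑ v ∈ E, x v := by
    intro E hE
    obtain ⟨hEA, hEH⟩ := mem_filter.mp hE
    have hEk := hmemA E hEA
    have hEP : ¬ E ⊆ P := fun h => (hsep E hEk).mpr h hEH
    have hsplit := Finset.sum_filter_add_sum_filter_not E (fun v => v ∈ P) x
    have h1 : ∑ v ∈ E.filter (fun v => v ∈ P), x v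
        = -((E.filter (fun v => v ∈ P)).card : ℝ) := by
      rw [Finset.sum_congr rfl (fun v hv => by
        simp only [hx]; rw [if_pos (mem_filter.mp hv).2]), Finset.sum_const]
      simp
    have h2 : ∑ v ∈ E.filter (fun v => v ∉ P), x v
        = ((E.filter (fun v => v ∉ P)).card : ℝ) * k := by
      rw [Finset.sum_congr rfl (fun v hv => by
        simp only [hx]; rw [if_neg (mem_filter.mp hv).2]), Finset.sum_const]
      simp [mul_comm]
    have hcards : (E.filter (fun v => v ∈ P)).card
        + (E.filter (fun v => v ∉ P)).card = k := by
      rw [Finset.card_filter_add_card_filter_not, hEk]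
    have hb1 : 1 ≤ (E.filter (fun v => v ∉ P)).card := by
      obtain ⟨w, hwE, hwP⟩ := not_subset.mp hEP
      have : w ∈ E.filter (fun v => v ∉ P) := mem_filter.mpr ⟨hwE, hwP⟩
      exact card_pos.mpr ⟨w, this⟩
    set a := (E.filter (fun v => v ∈ P)).card
    set b := (E.filter (fun v => v ∉ P)).card
    rw [← hsplit, h1, h2]
    have hab : (a : ℝ) + b = k := by exact_mod_cast hcards
    have hb1' : (1 : ℝ) ≤ b := by exact_mod_cast hb1
    have hk' : (1 : ℝ) ≤ k := by exact_mod_cast hk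
    nlinarith
  -- now conclude
  have hL0 : 0 ≤ ∑ E ∈ A.filter (fun E => E ∈ H), (∑ v ∈ E, x v) * y E :=
    Finset.sum_nonneg fun E hE =>
      mul_nonneg (le_trans zero_le_one (hpos E hE)) (hy0 E)
  have hRval : ∑ F ∈ A.filter (fun F => F ∉ H), (∑ v ∈ F, x v) * y F
      = -(k : ℝ) * ∑ F ∈ A.filter (fun F => F ∉ H), y F := by
    rw [Finset.mul_sum]
    exact Finset.sum_congr rfl fun F hF => by rw [hneg F hF]
  have hysum : 0 ≤ ∑ F ∈ A.filter (fun F => F ∉ H), y F :=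
    Finset.sum_nonneg fun F _ => hy0 F
  have hk0 : (0 : ℝ) < k := by exact_mod_cast hk
  have hR0 : ∑ F ∈ A.filter (fun F => F ∉ H), (∑ v ∈ F, x v) * y F ≤ 0 := by
    rw [hRval]; nlinarith
  have hLeq0 : ∑ E ∈ A.filter (fun E => E ∈ H), (∑ v ∈ E, x v) * y E = 0 :=
    le_antisymm (key ▸ hR0) hL0
  have hReq0 : ∑ F ∈ A.filter (fun F => F ∉ H), (∑ v ∈ F, x v) * y F = 0 := by
    rw [← key]; exact hLeq0
  have hyF : ∀ F ∈ A.filter (fun F => F ∉ H), y F = 0 := by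
    rw [hRval] at hReq0
    have hsum0 : ∑ F ∈ A.filter (fun F => F ∉ H), y F = 0 := by
      rcases mul_eq_zero.mp hReq0 with h | h
      · exfalso; linarith
      · exact h
    intro F hF
    exact (Finset.sum_eq_zero_iff_of_nonneg fun F _ => hy0 F).mp hsum0 F hF
  have hyE : ∀ E ∈ A.filter (fun E => E ∈ H), y E = 0 := by
    intro E hE
    have := (Finset.sum_eq_zero_iff_of_nonneg fun E hE =>
      mul_nonneg (le_trans zero_le_one (hpos E hE)) (hy0 E)).mp hLeq0 E hE
    have hσ : (∑ v ∈ E, x v) ≠ 0 := by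
      have := hpos E hE; linarith
    exact (mul_eq_zero.mp this).resolve_left hσ
  by_cases hGH : G ∈ H
  · exact hGne (hyE G (mem_filter.mpr ⟨hG, hGH⟩))
  · exact hGne (hyF G (mem_filter.mpr ⟨hG, hGH⟩))


section Steps2

variable {k : ℕ} {H : Finset (Finset V)}
variable (hk : 1 ≤ k) (hH : ∀ E ∈ H, E.card = k)
    (hbex : ∀ E₁ ∈ H, ∀ E₂ ∈ H, ∀ v₁ ∈ E₁ \ E₂,
      ∃ v₂ ∈ E₂ \ E₁, insert v₂ (E₁.erase v₁) ∈ H)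
    (hpaving : ∀ I : Finset V, I.card = k - 1 → ∃ E ∈ H, I ⊆ E)

include hk hH hbex hpaving

lemma exists_sep (hnx : ¬ ExchangeableHypergraph H) :
    ∃ P : Finset V, ∀ F : Finset V, F.card = k → (F ∉ H ↔ F ⊆ P) := by
  by_cases hall : ∀ F : Finset V, F.card = k → F ∈ H
  · refine ⟨∅, fun F hF => ⟨fun h => absurd (hall F hF) h, fun hsub => ?_⟩⟩
    exfalso
    have hFe : F = ∅ := subset_empty.mp hsub
    rw [hFe, card_empty] at hF
    omega
  · push_neg at hall
    obtain ⟨C₀, hC₀k, hC₀⟩ := hall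
    refine ⟨pmCl H C₀, fun F hFk => ⟨?_, fun hsub =>
      (dep_of_subset_cl hk hH hbex hpaving _ C₀ F hC₀ hC₀k hFk hsub rfl).1⟩⟩
    intro hFH
    by_contra hns
    obtain ⟨v₁, hv₁F, hv₁⟩ := not_subset.mp hns
    have hv₁clF : v₁ ∈ pmCl H F := subset_pmCl hv₁F
    have hx : ¬ pmCl H C₀ ⊆ pmCl H F := by
      intro hsub2
      have h := dep_of_subset_cl hk hH hbex hpaving _ F C₀ hFH hFk hC₀k
        (Subset.trans subset_pmCl hsub2) rfl
      exact hv₁ (h.2 ▸ hv₁clF)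
    obtain ⟨v₂, hv₂cl, hv₂⟩ := not_subset.mp hx
    have hne12 : v₁ ≠ v₂ := fun h => hv₁ (h ▸ hv₂cl)
    have hcard₀ : k ≤ (pmCl H C₀).card := hC₀k ▸ card_le_card subset_pmCl
    have hcardF : k ≤ (pmCl H F).card := hFk ▸ card_le_card subset_pmCl
    obtain ⟨I₁, hI₁sub, hI₁card⟩ := exists_subset_card_eq (s := (pmCl H C₀).erase v₂) (n := k-1)
      (by rw [card_erase_of_mem hv₂cl]; omega)
    obtain ⟨I₂, hI₂sub, hI₂card⟩ := exists_subset_card_eq (s := (pmCl H F).erase v₁) (n := k-1)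
      (by rw [card_erase_of_mem hv₁clF]; omega)
    have hI₁cl : I₁ ⊆ pmCl H C₀ := hI₁sub.trans (erase_subset _ _)
    have hI₂cl : I₂ ⊆ pmCl H F := hI₂sub.trans (erase_subset _ _)
    have hv₁I₁ : v₁ ∉ I₁ := fun h => hv₁ (hI₁cl h)
    have hv₂I₂ : v₂ ∉ I₂ := fun h => hv₂ (hI₂cl h)
    have hv₂I₁ : v₂ ∉ I₁ := fun h => (notMem_erase v₂ _) (hI₁sub h)
    have hv₁I₂ : v₁ ∉ I₂ := fun h => (notMem_erase v₁ _) (hI₂sub h)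
    have hB₁ : insert v₁ I₁ ∈ H :=
      indep_insert hk hH hbex hpaving hC₀ hC₀k hI₁card hI₁cl hv₁
    have hB₂ : insert v₂ I₂ ∈ H :=
      indep_insert hk hH hbex hpaving hFH hFk hI₂card hI₂cl hv₂
    apply hnx
    refine ⟨insert v₁ I₁, hB₁, insert v₂ I₂, hB₂, v₁, ?_, v₂, ?_, ?_, ?_⟩
    · rw [mem_sdiff]
      refine ⟨mem_insert_self _ _, ?_⟩
      simp only [mem_insert]
      push_neg
      exact ⟨hne12, hv₁I₂⟩
    · rw [mem_sdiff]
      refine ⟨mem_insert_self _ _, ?_⟩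
      simp only [mem_insert]
      push_neg
      exact ⟨Ne.symm hne12, hv₂I₁⟩
    · rw [erase_insert hv₁I₁]
      have hcard : (insert v₂ I₁).card = k := by
        rw [card_insert_of_notMem hv₂I₁, hI₁card]; omega
      exact (dep_of_subset_cl hk hH hbex hpaving _ C₀ (insert v₂ I₁) hC₀ hC₀k hcard
        (insert_subset hv₂cl hI₁cl) rfl).1
    · rw [erase_insert hv₂I₂]
      have hcard : (insert v₁ I₂).card = k := by
        rw [card_insert_of_notMem hv₁I₂, hI₂card]; omega
      exact (dep_of_subset_cl hk hH hbex hpaving _ F (insert v₁ I₂) hFH hFk hcard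
        (insert_subset hv₁clF hI₂cl) rfl).1

end Steps2

lemma equatable_of_exch {k : ℕ} {H : Finset (Finset V)} (hk : 1 ≤ k)
    (hH : ∀ E ∈ H, E.card = k) (hex : ExchangeableHypergraph H) :
    EquatableHypergraph k H := by
  obtain ⟨E₁, hE₁, E₂, hE₂, v₁, hv₁, v₂, hv₂, hF₁, hF₂⟩ := hex
  obtain ⟨hv₁E₁, hv₁E₂⟩ := mem_sdiff.mp hv₁
  obtain ⟨hv₂E₂, hv₂E₁⟩ := mem_sdiff.mp hv₂
  have hne : v₁ ≠ v₂ := fun h => hv₂E₁ (h ▸ hv₁E₁)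
  set F₁ : Finset V := insert v₂ (E₁.erase v₁) with hF₁def
  set F₂ : Finset V := insert v₁ (E₂.erase v₂) with hF₂def
  have hE₁k := hH E₁ hE₁
  have hE₂k := hH E₂ hE₂
  have hv₂e : v₂ ∉ E₁.erase v₁ := fun h => hv₂E₁ (mem_of_mem_erase h)
  have hv₁e : v₁ ∉ E₂.erase v₂ := fun h => hv₁E₂ (mem_of_mem_erase h)
  have hF₁k : F₁.card = k := by
    rw [hF₁def, card_insert_of_notMem hv₂e, card_erase_of_mem hv₁E₁, hE₁k]; omega
  have hF₂k : F₂.card = k := by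
    rw [hF₂def, card_insert_of_notMem hv₁e, card_erase_of_mem hv₂E₂, hE₂k]; omega
  have hF₁E₁ : F₁ ≠ E₁ := fun h => hF₁ (by rw [h]; exact hE₁)
  have hF₁E₂ : F₁ ≠ E₂ := fun h => hF₁ (by rw [h]; exact hE₂)
  have hF₂E₁ : F₂ ≠ E₁ := fun h => hF₂ (by rw [h]; exact hE₁)
  have hF₂E₂ : F₂ ≠ E₂ := fun h => hF₂ (by rw [h]; exact hE₂)
  set y : Finset V → ℝ := fun G => (if G = E₁ then 1 else 0) + (if G = E₂ then 1 else 0)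
    + (if G = F₁ then 1 else 0) + (if G = F₂ then 1 else 0) with hy
  have sum_eval : ∀ (s : Finset (Finset V)), ∑ G ∈ s, y G =
      (if E₁ ∈ s then (1:ℝ) else 0) + (if E₂ ∈ s then (1:ℝ) else 0)
        + (if F₁ ∈ s then (1:ℝ) else 0) + (if F₂ ∈ s then (1:ℝ) else 0) := by
    intro s
    rw [hy]
    rw [Finset.sum_add_distrib, Finset.sum_add_distrib, Finset.sum_add_distrib,
      Finset.sum_ite_eq' s, Finset.sum_ite_eq' s, Finset.sum_ite_eq' s,
      Finset.sum_ite_eq' s]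
  refine ⟨y, ?_, ?_, ?_⟩
  · intro G
    simp only [hy]
    split_ifs <;> norm_num
  · refine ⟨F₁, mem_powersetCard_univ.mpr hF₁k, ?_⟩
    simp only [hy]
    rw [if_neg hF₁E₁, if_neg hF₁E₂]
    split_ifs <;> norm_num
  · intro v
    rw [sum_eval, sum_eval]
    have e1 : (E₁ ∈ ((univ : Finset V).powersetCard k).filter
        (fun E => v ∈ E ∧ E ∈ H)) ↔ v ∈ E₁ := by
      simp [mem_filter, mem_powersetCard_univ, hE₁k, hE₁]
    have e2 : (E₂ ∈ ((univ : Finset V).powersetCard k).filter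
        (fun E => v ∈ E ∧ E ∈ H)) ↔ v ∈ E₂ := by
      simp [mem_filter, mem_powersetCard_univ, hE₂k, hE₂]
    have e3 : (F₁ ∈ ((univ : Finset V).powersetCard k).filter
        (fun E => v ∈ E ∧ E ∈ H)) ↔ False := by
      simp [mem_filter, hF₁]
    have e4 : (F₂ ∈ ((univ : Finset V).powersetCard k).filter
        (fun E => v ∈ E ∧ E ∈ H)) ↔ False := by
      simp [mem_filter, hF₂]
    have f1 : (E₁ ∈ ((univ : Finset V).powersetCard k).filter
        (fun F => v ∈ F ∧ F ∉ H)) ↔ False := by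
      simp [mem_filter, hE₁]
    have f2 : (E₂ ∈ ((univ : Finset V).powersetCard k).filter
        (fun F => v ∈ F ∧ F ∉ H)) ↔ False := by
      simp [mem_filter, hE₂]
    have f3 : (F₁ ∈ ((univ : Finset V).powersetCard k).filter
        (fun F => v ∈ F ∧ F ∉ H)) ↔ v ∈ F₁ := by
      simp [mem_filter, mem_powersetCard_univ, hF₁k, hF₁]
    have f4 : (F₂ ∈ ((univ : Finset V).powersetCard k).filter
        (fun F => v ∈ F ∧ F ∉ H)) ↔ v ∈ F₂ := by
      simp [mem_filter, mem_powersetCard_univ, hF₂k, hF₂]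
    simp only [e1, e2, e3, e4, f1, f2, f3, f4, if_false, iff_false]
    have m1 : v ∈ F₁ ↔ (v = v₂ ∨ (v ≠ v₁ ∧ v ∈ E₁)) := by
      rw [hF₁def]; simp [mem_insert, mem_erase]
    have m2 : v ∈ F₂ ↔ (v = v₁ ∨ (v ≠ v₂ ∧ v ∈ E₂)) := by
      rw [hF₂def]; simp [mem_insert, mem_erase]
    by_cases h1 : v = v₁ <;> by_cases h2 : v = v₂ <;>
      by_cases h3 : v ∈ E₁ <;> by_cases h4 : v ∈ E₂ <;>
      simp_all

end PavingMatroidAux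

/-- A paving k-matroid is equatable iff it is exchangeable. -/
theorem paving_matroid_equatable_iff_exchangeable [Fintype V] [DecidableEq V]
    (k : ℕ) (H : Finset (Finset V))
    (hk : 1 ≤ k) (hkn : k < Fintype.card V)
    (hH : ∀ E ∈ H, E.card = k) (hne : H.Nonempty)
    (hbex : ∀ E₁ ∈ H, ∀ E₂ ∈ H, ∀ v₁ ∈ E₁ \ E₂,
      ∃ v₂ ∈ E₂ \ E₁, insert v₂ (E₁.erase v₁) ∈ H)
    (hpaving : ∀ I : Finset V, I.card = k - 1 → ∃ E ∈ H, I ⊆ E) :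
    EquatableHypergraph k H ↔ ExchangeableHypergraph H := by
  constructor
  · intro heq
    by_contra hnx
    obtain ⟨P, hP⟩ := PavingMatroidAux.exists_sep hk hH hbex hpaving hnx
    exact PavingMatroidAux.not_equatable_of_sep hk hP heq
  · intro hex
    exact PavingMatroidAux.equatable_of_exch hk hH hex
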